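/- arXiv:2201.01646 — 9 statements merged into one kernel-verified Lean document; each statement's English description precedes it below -/
import Mathlib

section
/- A reversible reaction network with reaction energies (X, R, g) is thermodynamic if and only if it contains no perpetuum mobile (i.e., no flow v > 0 with S v = 0 and ⟨g, v⟩ ≠ 0). -/
open Matrix BigOperators

/-- A reversible RN with reaction energies is thermodynamic iff
it contains no perpetuum mobile. -/
theorem reversible_thermodynamic_iff_no_perpetuum_mobile
    {X R : Type*} [Fintype X] [Fintype R]
    (S : Matrix X R ℝ) (g : R → ℝ)
    (hrev : ∀ r : R, ∃ r' : R, ∀ x, S x r' = - S x r) :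
    (∀ v : R → ℝ, S.mulVec v = 0 → ∑ r, g r * v r = 0) ↔
      ¬ ∃ v : R → ℝ, (∀ r, 0 ≤ v r) ∧ v ≠ 0 ∧ S.mulVec v = 0 ∧
        ∑ r, g r * v r ≠ 0 := by
  classical
  constructor
  · rintro h ⟨v, -, -, hker, hg⟩
    exact hg (h v hker)
  · intro h v hv
    push_neg at h
    have h' : ∀ w : R → ℝ, (∀ r, 0 ≤ w r) → S.mulVec w = 0 → ∑ r, g r * w r = 0 := by
      intro w hw hker
      by_cases hw0 : w = 0
      · simp [hw0]
      · exact h w hw hw0 hker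
    choose ρ hρ using hrev
    -- g (ρ r) = - g r
    have hgρ : ∀ r, g (ρ r) = - g r := by
      intro r
      have hu := h' (fun s => (if s = r then (1:ℝ) else 0) + (if s = ρ r then 1 else 0))
        (fun s => by positivity) ?_
      · simp only [mul_add, mul_ite, mul_one, mul_zero, Finset.sum_add_distrib,
          Finset.sum_ite_eq', Finset.mem_univ, if_true] at hu
        linarith
      · funext x
        simp only [Matrix.mulVec, dotProduct, mul_add, mul_ite, mul_one, mul_zero,
          Finset.sum_add_distrib, Finset.sum_ite_eq', Finset.mem_univ, if_true,
          Pi.zero_apply, hρ]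
        ring
    -- decompose v
    set p : R → ℝ := fun s => max (v s) 0 with hp
    set m : R → ℝ := fun s => max (-(v s)) 0 with hm
    have hpm : ∀ s, v s = p s - m s := by
      intro s
      simp only [hp, hm]
      rcases le_total (v s) 0 with hs | hs
      · rw [max_eq_right hs, max_eq_left (by linarith)]; ring
      · rw [max_eq_left hs, max_eq_right (by linarith)]; ring
    set w : R → ℝ := fun s => p s + ∑ r, (if ρ r = s then m r else 0) with hw
    have hwnn : ∀ s, 0 ≤ w s := by
      intro s
      have h1 : (0:ℝ) ≤ p s := le_max_right _ _
      have h2 : (0:ℝ) ≤ ∑ r, (if ρ r = s then m r else 0) :=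
        Finset.sum_nonneg fun r _ => by
          split
          · exact le_max_right _ _
          · exact le_refl 0
      exact add_nonneg h1 h2
    have hwker : S.mulVec w = 0 := by
      funext x
      have key : ∑ s, S x s * w s = ∑ s, S x s * v s := by
        simp only [hw, mul_add, Finset.sum_add_distrib, Finset.mul_sum, mul_ite, mul_zero]
        have : ∀ s, ∑ r, (if ρ r = s then S x s * m r else 0)
            = ∑ r, (if ρ r = s then S x (ρ r) * m r else 0) := by
          intro s
          apply Finset.sum_congr rfl
          intro r _
          split_ifs with hrs
          · rw [hrs]
          · rfl
        rw [Finset.sum_congr rfl fun s _ => this s, Finset.sum_comm]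
        have : ∀ r, ∑ s, (if ρ r = s then S x (ρ r) * m r else 0) = S x (ρ r) * m r := by
          intro r
          simp [Finset.sum_ite_eq]
        rw [Finset.sum_congr rfl fun r _ => this r]
        have : ∀ r, S x (ρ r) * m r = -(S x r * m r) := by
          intro r; rw [hρ]; ring
        rw [Finset.sum_congr rfl fun r _ => this r, Finset.sum_neg_distrib]
        rw [← sub_eq_add_neg, ← Finset.sum_sub_distrib]
        apply Finset.sum_congr rfl
        intro s _
        rw [hpm s]; ring
      have hv0 : S.mulVec v x = 0 := by rw [hv]; rfl
      simp only [Matrix.mulVec, dotProduct] at hv0 ⊢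
      rw [key, hv0]; rfl
    have hwg : ∑ s, g s * w s = ∑ s, g s * v s := by
      simp only [hw, mul_add, Finset.sum_add_distrib, Finset.mul_sum, mul_ite, mul_zero]
      have : ∀ s, ∑ r, (if ρ r = s then g s * m r else 0)
          = ∑ r, (if ρ r = s then g (ρ r) * m r else 0) := by
        intro s
        apply Finset.sum_congr rfl
        intro r _
        split_ifs with hrs
        · rw [hrs]
        · rfl
      rw [Finset.sum_congr rfl fun s _ => this s, Finset.sum_comm]
      have : ∀ r, ∑ s, (if ρ r = s then g (ρ r) * m r else 0) = g (ρ r) * m r := by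
        intro r
        simp [Finset.sum_ite_eq]
      rw [Finset.sum_congr rfl fun r _ => this r]
      have : ∀ r, g (ρ r) * m r = -(g r * m r) := by
        intro r; rw [hgρ]; ring
      rw [Finset.sum_congr rfl fun r _ => this r, Finset.sum_neg_distrib]
      rw [← sub_eq_add_neg, ← Finset.sum_sub_distrib]
      apply Finset.sum_congr rfl
      intro s _
      rw [hpm s]; ring
    have := h' w hwnn hwker
    rw [hwg] at this
    exact this
end

section
/- A mixed reaction network (X, R_rev ⊔ R_irr) is thermodynamically sound if and only if there is no futile cycle supported entirely on the irreversible reactions, i.e., there is no v > 0 with S v = 0 and supp(v) ⊆ R_irr such that v_r = 0 for all r ∈ R_rev. -/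
open Matrix BigOperators

/-- A mixed RN is thermodynamically sound iff there is no futile
cycle supported entirely on the irreversible reactions. -/
theorem mixed_sound_iff_no_irreversible_futile_cycle
    {X R : Type*} [Fintype X] [Fintype R]
    (S : Matrix X R ℝ) (Rirr : Set R) :
    (∃ g : R → ℝ, (∀ r ∈ Rirr, g r < 0) ∧
        ∀ v : R → ℝ, S.mulVec v = 0 → ∑ r, g r * v r = 0) ↔
      ¬ ∃ v : R → ℝ, (∀ r, 0 ≤ v r) ∧ v ≠ 0 ∧ S.mulVec v = 0 ∧
        ∀ r ∉ Rirr, v r = 0 := by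
  constructor
  · rintro ⟨g, hg, horth⟩ ⟨v, hv0, hvne, hker, hsupp⟩
    have hsum := horth v hker
    have hterm : ∀ r ∈ Finset.univ, g r * v r ≤ 0 := by
      intro r _
      by_cases hr : r ∈ Rirr
      · exact mul_nonpos_of_nonpos_of_nonneg (le_of_lt (hg r hr)) (hv0 r)
      · simp [hsupp r hr]
    have hall : ∀ r ∈ Finset.univ, g r * v r = 0 :=
      (Finset.sum_eq_zero_iff_of_nonpos hterm).1 hsum
    obtain ⟨r, hr⟩ := Function.ne_iff.1 hvne
    have hvr : 0 < v r := lt_of_le_of_ne (hv0 r) (by simpa [eq_comm] using hr)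
    have hrirr : r ∈ Rirr := by
      by_contra h
      exact hr (hsupp r h)
    have : g r * v r < 0 := mul_neg_of_neg_of_pos (hg r hrirr) hvr
    exact absurd (hall r (Finset.mem_univ r)) (ne_of_lt this)
  · intro hno
    classical
    by_cases hRe : Rirr = ∅
    · refine ⟨0, by simp [hRe], by simp⟩
    -- the kernel of S is a closed convex set
    set K : Set (R → ℝ) := {w : R → ℝ | S.mulVec w = 0} with hK
    have hKconv : Convex ℝ K := by
      intro x hx y hy a b _ _ _
      simp only [hK, Set.mem_setOf_eq] at *
      simp [Matrix.mulVec_add, Matrix.mulVec_smul, hx, hy]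
    have hKclosed : IsClosed K := by
      have hcont : Continuous fun w : R → ℝ => S.mulVec w :=
        (S.mulVecLin).continuous_of_finiteDimensional
      exact isClosed_singleton.preimage hcont
    -- the simplex on the irreversible coordinates
    set P : Set (R → ℝ) := (fun r => Pi.single r (1 : ℝ)) '' Rirr with hP
    have hPfin : P.Finite := (Set.toFinite Rirr).image _
    set D : Set (R → ℝ) := convexHull ℝ P with hD
    have hDcomp : IsCompact D := hPfin.isCompact_convexHull (𝕜 := ℝ)
    have hDconv : Convex ℝ D := convex_convexHull ℝ P
    -- every point of D is a nonneg vector supported on Rirr with coordinate sum 1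
    set C : Set (R → ℝ) := {x | (∀ i, 0 ≤ x i) ∧ (∀ i ∉ Rirr, x i = 0) ∧ ∑ i, x i = 1}
      with hC
    have hCconv : Convex ℝ C := by
      rintro x ⟨hx1, hx2, hx3⟩ y ⟨hy1, hy2, hy3⟩ a b ha hb hab
      refine ⟨fun i => add_nonneg (mul_nonneg ha (hx1 i)) (mul_nonneg hb (hy1 i)),
        fun i hi => by simp [Pi.add_apply, hx2 i hi, hy2 i hi],
        ?_⟩
      simp only [Pi.add_apply, Pi.smul_apply, smul_eq_mul]
      rw [Finset.sum_add_distrib, ← Finset.mul_sum, ← Finset.mul_sum, hx3, hy3]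
      simpa using hab
    have hPC : P ⊆ C := by
      rintro _ ⟨r, hr, rfl⟩
      refine ⟨fun i => ?_, fun i hi => ?_, by simp⟩
      · rcases eq_or_ne i r with rfl | h
        · simp
        · simp [Pi.single_apply, h]
      · have : i ≠ r := fun h => hi (h ▸ hr)
        simp [Pi.single_apply, this]
    have hDC : D ⊆ C := convexHull_min hPC hCconv
    -- D and K are disjoint
    have hdisj : Disjoint D K := by
      rw [Set.disjoint_left]
      intro x hxD hxK
      obtain ⟨hx1, hx2, hx3⟩ := hDC hxD
      refine hno ⟨x, hx1, ?_, hxK, hx2⟩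
      intro h
      rw [h] at hx3
      simp at hx3
    -- separate
    obtain ⟨f, u, t, hfs, hut, hft⟩ :=
      geometric_hahn_banach_compact_closed hDconv hDcomp hKconv hKclosed hdisj
    -- f vanishes on K
    have hfK : ∀ w ∈ K, f w = 0 := by
      intro w hw
      by_contra hne
      have hmem : ((t - 1) / f w) • w ∈ K := by
        simp only [hK, Set.mem_setOf_eq] at hw ⊢
        rw [Matrix.mulVec_smul, hw]
        simp
      have := hft _ hmem
      rw [_root_.map_smul, smul_eq_mul, div_mul_cancel₀ _ hne] at this
      linarith
    have h0K : (0 : R → ℝ) ∈ K := by simp [hK]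
    have ht0 : t < 0 := by simpa using hft 0 h0K
    refine ⟨fun r => f (Pi.single r 1), fun r hr => ?_, fun v hv => ?_⟩
    · have : Pi.single r (1 : ℝ) ∈ D :=
        subset_convexHull ℝ P ⟨r, hr, rfl⟩
      have := hfs _ this
      linarith
    · have hveq : v = ∑ r, (v r) • (Pi.single r (1 : ℝ) : R → ℝ) := by
        funext i
        simp only [Finset.sum_apply, Pi.smul_apply, smul_eq_mul]
        rw [Finset.sum_eq_single i]
        · simp
        · intro b _ hb
          simp [Pi.single_apply, hb.symm]
        · simp
      have : f v = ∑ r, v r * f (Pi.single r 1) := by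
        conv_lhs => rw [hveq]
        rw [map_sum]
        simp [_root_.map_smul]
      have hfv : f v = 0 := hfK v hv
      rw [hfv] at this
      rw [Finset.sum_congr rfl (fun r _ => mul_comm (f (Pi.single r 1)) (v r))]
      linarith [this]
end

section
/- A reversible reaction network is free of cornucopias and abysses if and only if it is conservative, i.e., either there exists a vector v ∈ ℝ^R with S v > 0 (nonnegative nonzero), or there exists m ≫ 0 (strictly positive) with Sᵀ m = 0, but not both. -/
open Matrix BigOperators

/-- A reversible RN is free of cornucopias and abysses iff it is
conservative. -/
theorem reversible_no_cornucopia_abyss_iff_conservative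
    {X R : Type*} [Fintype X] [Fintype R]
    (S : Matrix X R ℝ)
    (hrev : ∀ r : R, ∃ r' : R, ∀ x, S x r' = - S x r) :
    (¬ ∃ v : R → ℝ, ((∀ r, 0 ≤ v r) ∧ v ≠ 0) ∧
        (((∀ x, 0 ≤ S.mulVec v x) ∧ S.mulVec v ≠ 0) ∨
         ((∀ x, S.mulVec v x ≤ 0) ∧ S.mulVec v ≠ 0))) ↔
      ∃ m : X → ℝ, (∀ x, 0 < m x) ∧ Matrix.vecMul m S = 0 := by
  classical
  constructor
  · intro h
    set T : Submodule ℝ (X → ℝ) := LinearMap.range (Matrix.mulVecLin S) with hT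
    have hTclosed : IsClosed (T : Set (X → ℝ)) := T.closed_of_finiteDimensional
    -- Any vector in the range of S is the image of a nonnegative vector
    have hrange : ∀ w ∈ T, ∃ v' : R → ℝ, (∀ r, 0 ≤ v' r) ∧ S.mulVec v' = w := by
      rintro w ⟨v, rfl⟩
      set rev : R → R := fun r => (hrev r).choose with hrevdef
      have hrevspec : ∀ r x, S x (rev r) = - S x r := fun r => (hrev r).choose_spec
      refine ⟨fun r => max (v r) 0 +
        ∑ s ∈ Finset.univ.filter (fun s => rev s = r), max (-v s) 0, ?_, ?_⟩
      · intro r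
        have h1 : (0:ℝ) ≤ ∑ s ∈ Finset.univ.filter (fun s => rev s = r), max (-v s) 0 :=
          Finset.sum_nonneg fun s _ => le_max_right _ _
        have h2 : (0:ℝ) ≤ max (v r) 0 := le_max_right _ _
        exact add_nonneg h2 h1
      · funext x
        simp only [Matrix.mulVecLin_apply, Matrix.mulVec, dotProduct]
        rw [Finset.sum_congr rfl (fun r _ => mul_add (S x r) _ _), Finset.sum_add_distrib]
        have hfib : ∑ r : R, S x r * ∑ s ∈ Finset.univ.filter (fun s => rev s = r),
            max (-v s) 0 = ∑ s : R, (- S x s) * max (-v s) 0 := by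
          have : ∀ r : R, S x r * ∑ s ∈ Finset.univ.filter (fun s => rev s = r), max (-v s) 0
              = ∑ s ∈ Finset.univ.filter (fun s => rev s = r), S x (rev s) * max (-v s) 0 := by
            intro r
            rw [Finset.mul_sum]
            refine Finset.sum_congr rfl fun s hs => ?_
            rw [(Finset.mem_filter.mp hs).2]
          rw [Finset.sum_congr rfl fun r _ => this r]
          rw [Finset.sum_fiberwise_of_maps_to (fun s _ => Finset.mem_univ (rev s))
            (fun s => S x (rev s) * max (-v s) 0)]
          exact Finset.sum_congr rfl fun s _ => by rw [hrevspec s x]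
        rw [hfib, ← Finset.sum_add_distrib]
        refine Finset.sum_congr rfl fun r _ => ?_
        have : max (v r) 0 - max (-v r) 0 = v r := by
          rcases le_total (v r) 0 with hv | hv
          · rw [max_eq_right hv, max_eq_left (by linarith)]; ring
          · rw [max_eq_left hv, max_eq_right (by linarith)]; ring
        linear_combination S x r * this
    have hdisj : Disjoint (stdSimplex ℝ X) (T : Set (X → ℝ)) := by
      rw [Set.disjoint_left]
      rintro w ⟨hw0, hw1⟩ hwT
      obtain ⟨v', hv'0, hv'w⟩ := hrange w hwT
      have hwne : w ≠ 0 := by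
        intro h0
        rw [h0] at hw1
        simp at hw1
      have hv'ne : v' ≠ 0 := by
        intro h0
        rw [h0] at hv'w
        simp [Matrix.mulVec_zero] at hv'w
        exact hwne hv'w.symm
      exact h ⟨v', ⟨hv'0, hv'ne⟩, Or.inl ⟨fun x => hv'w ▸ hw0 x, hv'w ▸ hwne⟩⟩
    obtain ⟨f, u, c, hfu, huc, hfc⟩ :=
      geometric_hahn_banach_compact_closed (convex_stdSimplex ℝ X) (isCompact_stdSimplex ℝ X)
        T.convex hTclosed hdisj
    -- f vanishes on T
    have hf0 : ∀ b ∈ T, f b = 0 := by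
      intro b hb
      by_contra hne
      have hsm : ((c - 1) / f b) • b ∈ T := T.smul_mem _ hb
      have := hfc _ hsm
      rw [f.map_smul, smul_eq_mul, div_mul_cancel₀ _ hne] at this
      linarith
    have hc0 : c < 0 := by
      have := hfc 0 T.zero_mem
      simpa using this
    refine ⟨fun x => -f (Pi.single x 1), fun x => ?_, ?_⟩
    · have := hfu _ (single_mem_stdSimplex ℝ x)
      simp only
      linarith
    · funext r
      have hcol : (fun x => S x r) ∈ T := ⟨Pi.single r 1, by
        funext x
        simp [Matrix.mulVecLin_apply, Matrix.mulVec, dotProduct, Pi.single_apply]⟩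
      have hdecomp : (fun x => S x r) = ∑ x : X, S x r • (Pi.single x 1 : X → ℝ) := by
        funext y
        simp [Finset.sum_apply, Pi.single_apply]
      have hfval : f (fun x => S x r) = ∑ x : X, S x r * f (Pi.single x 1) := by
        rw [hdecomp, map_sum]
        exact Finset.sum_congr rfl fun x _ => by rw [f.map_smul, smul_eq_mul]
      have h0 := hf0 _ hcol
      rw [hfval] at h0
      simp only [Matrix.vecMul, dotProduct, Pi.zero_apply]
      calc ∑ x : X, -f (Pi.single x 1) * S x r
          = -(∑ x : X, S x r * f (Pi.single x 1)) := by
            rw [← Finset.sum_neg_distrib]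
            exact Finset.sum_congr rfl fun x _ => by ring
        _ = 0 := by rw [h0, neg_zero]
  · rintro ⟨m, hm, hmS⟩ ⟨v, ⟨hv0, hvne⟩, hcase⟩
    have hdot : m ⬝ᵥ S.mulVec v = 0 := by
      rw [Matrix.dotProduct_mulVec, hmS, zero_dotProduct]
    rcases hcase with ⟨hpos, hne⟩ | ⟨hneg, hne⟩
    · have hzero : ∀ x : X, m x * S.mulVec v x = 0 := by
        have := (Finset.sum_eq_zero_iff_of_nonneg (fun x _ =>
          mul_nonneg (hm x).le (hpos x))).mp hdot
        exact fun x => this x (Finset.mem_univ x)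
      exact hne (funext fun x => by
        have := hzero x
        show S.mulVec v x = 0
        rcases mul_eq_zero.mp this with h | h
        · exact absurd h (ne_of_gt (hm x))
        · exact h)
    · have hdot' : ∑ x : X, m x * (-(S.mulVec v x)) = 0 := by
        have h2 : ∑ x : X, (m x * (-(S.mulVec v x)) + m x * S.mulVec v x) = 0 :=
          Finset.sum_eq_zero fun x _ => by ring
        rw [Finset.sum_add_distrib] at h2
        have h3 : ∑ x : X, m x * S.mulVec v x = 0 := hdot
        linarith
      have hzero : ∀ x : X, m x * (-(S.mulVec v x)) = 0 := by
        have := (Finset.sum_eq_zero_iff_of_nonneg (fun x _ =>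
          mul_nonneg (hm x).le (by linarith [hneg x]))).mp hdot'
        exact fun x => this x (Finset.mem_univ x)
      exact hne (funext fun x => by
        have := hzero x
        show S.mulVec v x = 0
        rcases mul_eq_zero.mp this with h | h
        · exact absurd h (ne_of_gt (hm x))
        · linarith [neg_eq_zero.mp h])
end

section
/- An integer vector y ∈ 𝒦(S) is minimal (no y' ∈ 𝒦(S) with y' < y componentwise) if and only if it cannot be written as y = c' y' + c'' y'' with y', y'' ∈ 𝒦(S) and c', c'' positive integers. -/
open Matrix BigOperators

/-- `MCL S y`: `y` is a moiety conservation law, i.e., a nonzero nonnegative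
integer left-kernel vector of the stoichiometric matrix `S`. -/
def MCL {X R : Type*} [Fintype X] [Fintype R] (S : Matrix X R ℤ) (y : X → ℕ) : Prop :=
  y ≠ 0 ∧ Matrix.vecMul (fun x => (y x : ℤ)) S = 0

/-- `y ∈ 𝒦(S)` is minimal iff it is not an integer combination
`y = c' y' + c'' y''` with `y', y'' ∈ 𝒦(S)` and positive integers `c', c''`. -/
theorem mcl_minimal_iff_indecomposable
    {X R : Type*} [Fintype X] [Fintype R]
    (S : Matrix X R ℤ) (y : X → ℕ) (hy : MCL S y) :
    (¬ ∃ y' : X → ℕ, MCL S y' ∧ y' ≤ y ∧ y' ≠ y) ↔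
      ¬ ∃ (y' y'' : X → ℕ) (c' c'' : ℕ), MCL S y' ∧ MCL S y'' ∧
        0 < c' ∧ 0 < c'' ∧ y = c' • y' + c'' • y'' := by
  constructor
  · intro hmin hdec
    obtain ⟨y', y'', c', c'', hy', hy'', hc', hc'', heq⟩ := hdec
    apply hmin
    have hle : y' ≤ y := by
      intro x
      have hx := congrFun heq x
      simp only [Pi.add_apply, Pi.smul_apply, smul_eq_mul] at hx
      calc y' x ≤ c' * y' x := Nat.le_mul_of_pos_left _ hc'
        _ ≤ c' * y' x + c'' * y'' x := Nat.le_add_right _ _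
        _ = y x := hx.symm
    refine ⟨y', hy', hle, ?_⟩
    intro h
    subst h
    obtain ⟨x, hx0⟩ : ∃ x, y'' x ≠ 0 := by
      by_contra hall
      push_neg at hall
      exact hy''.1 (funext fun x => hall x)
    have hx := congrFun heq x
    simp only [Pi.add_apply, Pi.smul_apply, smul_eq_mul] at hx
    have h1 : 1 ≤ c'' * y'' x := Nat.one_le_iff_ne_zero.mpr (by positivity)
    nlinarith
  · intro hind hsmall
    obtain ⟨y', hy', hle, hne⟩ := hsmall
    apply hind
    refine ⟨y', fun x => y x - y' x, 1, 1, hy', ⟨?_, ?_⟩, one_pos, one_pos, ?_⟩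
    · intro h
      apply hne
      funext x
      have h1 : y x - y' x = 0 := congrFun h x
      have h2 : y' x ≤ y x := hle x
      omega
    · have hcast : (fun x => ((y x - y' x : ℕ) : ℤ)) =
          (fun x => (y x : ℤ)) - (fun x => (y' x : ℤ)) := by
        funext x
        simp [Nat.cast_sub (hle x)]
      rw [hcast, Matrix.sub_vecMul, hy.2, hy'.2, sub_zero]
    · funext x
      simp only [Pi.add_apply, Pi.smul_apply, smul_eq_mul, one_mul]
      have h2 : y' x ≤ y x := hle x
      omega
end

section
/- A reaction network (X, R) admits a sum-formula instance if and only if it is conservative. -/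
open Matrix BigOperators

section Aux

variable {X R : Type*} [Fintype X] [Fintype R]

/-- The dot-product bilinear form on `X → ℚ`. -/
noncomputable def dotForm (X : Type*) [Fintype X] : LinearMap.BilinForm ℚ (X → ℚ) :=
  LinearMap.mk₂ ℚ (fun u v => ∑ x, u x * v x)
    (fun u u' v => by simp [add_mul, Finset.sum_add_distrib])
    (fun c u v => by simp [Finset.mul_sum, mul_assoc])
    (fun u v v' => by simp [mul_add, Finset.sum_add_distrib])
    (fun c u v => by
      simp only [Pi.smul_apply, smul_eq_mul, Finset.mul_sum]
      exact Finset.sum_congr rfl fun x _ => by ring)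

lemma dotForm_apply (u v : X → ℚ) : dotForm X u v = ∑ x, u x * v x := rfl

lemma dotForm_symm (u v : X → ℚ) : dotForm X u v = dotForm X v u := by
  simp only [dotForm_apply]
  exact Finset.sum_congr rfl fun x _ => mul_comm _ _

lemma dotForm_self_eq_zero {u : X → ℚ} (h : dotForm X u u = 0) : u = 0 := by
  rw [dotForm_apply] at h
  funext x
  have := (Finset.sum_eq_zero_iff_of_nonneg
    (fun x _ => mul_self_nonneg (u x))).mp h x (Finset.mem_univ x)
  exact mul_self_eq_zero.mp this

end Aux

/-- A RN admits a sum-formula instance iff it is conservative. -/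
theorem sf_instance_iff_conservative
    {X R : Type*} [Fintype X] [Fintype R]
    (S : Matrix X R ℤ) :
    (∃ (n : ℕ), 0 < n ∧ ∃ A : Fin n → X → ℕ,
        (∀ x, ∃ a, A a x ≠ 0) ∧
        (∀ a, Matrix.vecMul (fun x => (A a x : ℤ)) S = 0)) ↔
      ∃ m : X → ℝ, (∀ x, 0 < m x) ∧
        Matrix.vecMul m (S.map (Int.cast : ℤ → ℝ)) = 0 := by
  constructor
  · -- easy direction
    rintro ⟨n, hn, A, hA1, hA2⟩
    refine ⟨fun x => ∑ a, (A a x : ℝ), ?_, ?_⟩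
    · intro x
      obtain ⟨a, ha⟩ := hA1 x
      exact Finset.sum_pos' (fun a _ => by positivity)
        ⟨a, Finset.mem_univ a, by exact_mod_cast Nat.pos_of_ne_zero ha⟩
    · funext r
      have h2 : ∀ a, ∑ x, (A a x : ℤ) * S x r = 0 := fun a => by
        have := congrFun (hA2 a) r
        simpa [Matrix.vecMul, dotProduct] using this
      have : ∑ x, (∑ a, (A a x : ℝ)) * ((S x r : ℤ) : ℝ) = 0 := by
        simp_rw [Finset.sum_mul]
        rw [Finset.sum_comm]
        exact Finset.sum_eq_zero fun a _ => by
          have h0 : ((∑ x, (A a x : ℤ) * S x r : ℤ) : ℝ) = 0 := by rw [h2 a]; simp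
          push_cast at h0
          exact h0
      simpa [Matrix.vecMul, dotProduct, Matrix.map_apply] using this
  · -- hard direction
    rintro ⟨m, hmpos, hmker⟩
    classical
    rcases isEmpty_or_nonempty X with hX | hX
    · refine ⟨1, one_pos, fun _ _ => 1, fun x => (IsEmpty.false x).elim, fun _ => ?_⟩
      funext r
      simp [Matrix.vecMul, dotProduct]
    · -- real kernel predicate
      set P : (X → ℝ) → Prop := fun f => ∀ r, ∑ x, f x * ((S x r : ℤ) : ℝ) = 0 with hP
      have hPm : P m := by
        intro r
        have := congrFun hmker r
        simpa [Matrix.vecMul, dotProduct, Matrix.map_apply] using this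
      have hP0 : P 0 := fun r => by simp
      have hPadd : ∀ f g, P f → P g → P (f + g) := fun f g hf hg r => by
        simp only [Pi.add_apply, add_mul, Finset.sum_add_distrib, hf r, hg r, add_zero]
      have hPsmul : ∀ (a : ℝ) f, P f → P (a • f) := fun a f hf r => by
        simp only [Pi.smul_apply, smul_eq_mul, mul_assoc, ← Finset.mul_sum, hf r, mul_zero]
      -- rational setup
      set B := dotForm X with hBdef
      set c : R → (X → ℚ) := fun r x => ((S x r : ℤ) : ℚ) with hc
      set V : Submodule ℚ (X → ℚ) := Submodule.span ℚ (Set.range c) with hVdef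
      have hRefl : B.IsRefl := fun u v h => by rwa [dotForm_symm] at h
      have hnd : (B.restrict V).Nondegenerate := by
        refine ⟨?_, ?_⟩ <;> intro v hv <;>
        · have h0 : dotForm X (v : X → ℚ) (v : X → ℚ) = 0 := by
            simpa using hv v
          exact Subtype.ext (dotForm_self_eq_zero h0)
      set K : Submodule ℚ (X → ℚ) := B.orthogonal V with hKdef
      have hcompl : IsCompl V K :=
        LinearMap.BilinForm.isCompl_orthogonal_of_restrict_nondegenerate hRefl hnd
      -- rational kernel equations for elements of K
      have hKker : ∀ w ∈ K, ∀ r, ∑ x, w x * ((S x r : ℤ) : ℚ) = 0 := by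
        intro w hw r
        have h1 : B (c r) w = 0 := hw (c r) (Submodule.subset_span ⟨r, rfl⟩)
        rw [dotForm_symm] at h1
        simpa [dotForm_apply, hc] using h1
      -- coercion to reals
      set iota : (X → ℚ) → (X → ℝ) := fun w x => ((w x : ℚ) : ℝ) with hiota
      have hiota_add : ∀ u v, iota (u + v) = iota u + iota v := by
        intro u v; funext x; simp [hiota]
      have hiota_smul : ∀ (a : ℚ) u, iota (a • u) = (a : ℝ) • iota u := by
        intro a u; funext x; simp [hiota]
      set KR : Submodule ℝ (X → ℝ) := Submodule.span ℝ (iota '' (K : Set (X → ℚ))) with hKR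
      set VR : Submodule ℝ (X → ℝ) := Submodule.span ℝ (iota '' (V : Set (X → ℚ))) with hVR
      -- every element of KR satisfies P
      have hKRP : ∀ f ∈ KR, P f := by
        intro f hf
        refine Submodule.span_induction ?_ hP0 (fun a b _ _ => hPadd a b)
          (fun a b _ => hPsmul a b) hf
        rintro _ ⟨w, hw, rfl⟩ r
        have h1 := hKker w hw r
        have h2 : ((∑ x, w x * ((S x r : ℤ) : ℚ) : ℚ) : ℝ) = 0 := by rw [h1]; simp
        push_cast at h2
        simpa [hiota] using h2
      -- VR ⊔ KR = ⊤
      have htop : VR ⊔ KR = ⊤ := by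
        rw [eq_top_iff]
        intro f _
        have hf : f = ∑ x, f x • (fun y => if x = y then (1 : ℝ) else 0) := pi_eq_sum_univ f
        rw [hf]
        refine Submodule.sum_mem _ fun x _ => Submodule.smul_mem _ _ ?_
        have hd : (fun y => if x = y then (1 : ℚ) else 0) ∈ V ⊔ K := by
          rw [hcompl.sup_eq_top]; trivial
        obtain ⟨p, hp, q, hq, hpq⟩ := Submodule.mem_sup.mp hd
        have : (fun y => if x = y then (1 : ℝ) else 0) = iota p + iota q := by
          funext y
          have := congrFun hpq y
          simp only [Pi.add_apply] at this ⊢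
          simp only [hiota]
          rw [show ((if x = y then (1 : ℝ) else 0)) = (((if x = y then (1 : ℚ) else 0) : ℚ) : ℝ) by
            split <;> simp, ← this]
          push_cast
          ring
        rw [this]
        exact Submodule.add_mem _
          (Submodule.mem_sup_left (Submodule.subset_span ⟨p, hp, rfl⟩))
          (Submodule.mem_sup_right (Submodule.subset_span ⟨q, hq, rfl⟩))
      -- VR is contained in the real span of the columns
      set cR : R → (X → ℝ) := fun r x => ((S x r : ℤ) : ℝ) with hcR
      have hVRle : VR ≤ Submodule.span ℝ (Set.range cR) := by
        rw [hVR, Submodule.span_le]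
        rintro _ ⟨w, hw, rfl⟩
        have : ∀ (w : X → ℚ), w ∈ V → iota w ∈ Submodule.span ℝ (Set.range cR) := by
          intro w hw
          refine Submodule.span_induction ?_ ?_ ?_ ?_ hw
          · rintro _ ⟨r, rfl⟩
            refine Submodule.subset_span ⟨r, ?_⟩
            funext x; simp [hiota, hc, hcR]
          · have : iota 0 = 0 := by funext x; simp [hiota]
            rw [this]; exact Submodule.zero_mem _
          · intro a b _ _ ha hb
            rw [hiota_add]; exact Submodule.add_mem _ ha hb
          · intro a u _ hu
            rw [hiota_smul]; exact Submodule.smul_mem _ _ hu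
        exact this w hw
      -- decompose m
      have hm_top : m ∈ VR ⊔ KR := htop ▸ Submodule.mem_top
      obtain ⟨v, hv, k, hk, hvk⟩ := Submodule.mem_sup.mp hm_top
      -- v satisfies P
      have hPk : P k := hKRP k hk
      have hPv : P v := by
        have : v = m - k := by rw [← hvk]; ring
        rw [this]
        intro r
        simp only [Pi.sub_apply, sub_mul, Finset.sum_sub_distrib, hPm r, hPk r, sub_zero]
      -- v = 0
      have hv0 : v = 0 := by
        obtain ⟨t, ht⟩ := (Submodule.mem_span_range_iff_exists_fun ℝ).mp (hVRle hv)
        have hvx : ∀ x, v x = ∑ r, t r * cR r x := by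
          intro x
          rw [← ht]
          simp [Finset.sum_apply]
        have hsq : ∑ x, v x * v x = 0 := by
          calc ∑ x, v x * v x
              = ∑ x, (∑ r, t r * cR r x) * v x :=
                Finset.sum_congr rfl fun x _ => by rw [← hvx x]
            _ = ∑ x, ∑ r, t r * cR r x * v x := by
                refine Finset.sum_congr rfl fun x _ => ?_
                rw [Finset.sum_mul]
            _ = ∑ r, ∑ x, t r * cR r x * v x := Finset.sum_comm
            _ = ∑ r, t r * ∑ x, v x * cR r x := by
                refine Finset.sum_congr rfl fun r _ => ?_
                rw [Finset.mul_sum]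
                exact Finset.sum_congr rfl fun x _ => by ring
            _ = 0 := Finset.sum_eq_zero fun r _ => by
                have : ∑ x, v x * cR r x = 0 := hPv r
                rw [this, mul_zero]
        funext x
        have := (Finset.sum_eq_zero_iff_of_nonneg
          (fun x _ => mul_self_nonneg (v x))).mp hsq x (Finset.mem_univ x)
        exact mul_self_eq_zero.mp this
      have hmKR : m ∈ KR := by
        rw [← hvk, hv0, zero_add]; exact hk
      -- represent m as a real combination of elements of K
      obtain ⟨nn, fcoef, g, hg⟩ := Submodule.mem_span_set'.mp (hKR ▸ hmKR)
      choose w hwK hwEq using fun i => (g i).2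
      have hmx : ∀ x, m x = ∑ i, fcoef i * ((w i x : ℚ) : ℝ) := by
        intro x
        rw [← hg, Finset.sum_apply]
        refine Finset.sum_congr rfl fun i _ => ?_
        rw [Pi.smul_apply, smul_eq_mul, ← hwEq i]
      -- approximation constants
      set δ : ℝ := Finset.univ.inf' Finset.univ_nonempty m with hδ
      have hδpos : 0 < δ := by
        rw [hδ, Finset.lt_inf'_iff]
        exact fun x _ => hmpos x
      have hδle : ∀ x, δ ≤ m x := fun x => Finset.inf'_le _ (Finset.mem_univ x)
      set C : ℝ := 1 + ∑ i, ∑ x, |((w i x : ℚ) : ℝ)| with hC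
      have hCpos : 0 < C := by
        have : (0:ℝ) ≤ ∑ i, ∑ x, |((w i x : ℚ) : ℝ)| :=
          Finset.sum_nonneg fun i _ => Finset.sum_nonneg fun x _ => abs_nonneg _
        linarith
      have hCb : ∀ x, ∑ i, |((w i x : ℚ) : ℝ)| ≤ C - 1 := by
        intro x
        have hC1 : C - 1 = ∑ i, ∑ y, |((w i y : ℚ) : ℝ)| := by rw [hC]; ring
        rw [hC1]
        exact Finset.sum_le_sum fun i _ =>
          Finset.single_le_sum (f := fun y => |((w i y : ℚ) : ℝ)|)
            (fun y _ => abs_nonneg _) (Finset.mem_univ x)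
      set ε : ℝ := δ / C with hε
      have hεpos : 0 < ε := div_pos hδpos hCpos
      choose q hq using fun i => exists_rat_near (fcoef i) hεpos
      set wq : X → ℚ := ∑ i, q i • w i with hwq
      have hwqK : wq ∈ K := Submodule.sum_mem _ fun i _ => K.smul_mem _ (hwK i)
      have hwqx : ∀ x, ((wq x : ℚ) : ℝ) = ∑ i, (q i : ℝ) * ((w i x : ℚ) : ℝ) := by
        intro x
        have h1 : wq x = ∑ i, q i * w i x := by
          rw [hwq, Finset.sum_apply]
          exact Finset.sum_congr rfl fun i _ => rfl
        rw [h1]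
        push_cast
        rfl
      have hwqpos : ∀ x, 0 < wq x := by
        intro x
        have habs : |((wq x : ℚ) : ℝ) - m x| < δ := by
          have h1 : ((wq x : ℚ) : ℝ) - m x = ∑ i, ((q i : ℝ) - fcoef i) * ((w i x : ℚ) : ℝ) := by
            rw [hwqx x, hmx x, ← Finset.sum_sub_distrib]
            exact Finset.sum_congr rfl fun i _ => by ring
          rw [h1]
          calc |∑ i, ((q i : ℝ) - fcoef i) * ((w i x : ℚ) : ℝ)|
              ≤ ∑ i, |((q i : ℝ) - fcoef i) * ((w i x : ℚ) : ℝ)| :=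
                Finset.abs_sum_le_sum_abs _ _
            _ ≤ ∑ i, ε * |((w i x : ℚ) : ℝ)| := by
                refine Finset.sum_le_sum fun i _ => ?_
                rw [abs_mul]
                refine mul_le_mul_of_nonneg_right ?_ (abs_nonneg _)
                rw [abs_sub_comm]
                exact (hq i).le
            _ = ε * ∑ i, |((w i x : ℚ) : ℝ)| := (Finset.mul_sum _ _ _).symm
            _ ≤ ε * (C - 1) := mul_le_mul_of_nonneg_left (hCb x) hεpos.le
            _ < ε * C := by
                refine mul_lt_mul_of_pos_left ?_ hεpos
                linarith
            _ = δ := by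
                rw [hε]
                field_simp
        have h2 := (abs_lt.mp habs).1
        have h3 := hδle x
        have hpos : 0 < ((wq x : ℚ) : ℝ) := by linarith
        exact_mod_cast hpos
      -- clear denominators
      set N : ℕ := ∏ x, (wq x).den with hN
      have hNpos : 0 < N := Finset.prod_pos fun x _ => (wq x).pos
      have hint : ∀ x, ∃ zz : ℤ, ((zz : ℤ) : ℚ) = (N : ℚ) * wq x := by
        intro x
        obtain ⟨tt, htt⟩ := Finset.dvd_prod_of_mem (fun y => (wq y).den) (Finset.mem_univ x)
        set a : ℤ := (wq x).num with ha
        set d : ℕ := (wq x).den with hd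
        have hd0 : (d : ℚ) ≠ 0 := by
          exact_mod_cast (wq x).den_ne_zero
        have hq0 : wq x = (a : ℚ) / (d : ℚ) := (Rat.num_div_den (wq x)).symm
        have hNq : (N : ℚ) = (d : ℚ) * (tt : ℚ) := by
          rw [hN]
          exact_mod_cast congrArg (fun n : ℕ => (n : ℚ)) htt
        refine ⟨(tt : ℤ) * a, ?_⟩
        rw [hNq, hq0]
        push_cast
        field_simp
      choose z hz using hint
      have hzpos : ∀ x, 0 < z x := by
        intro x
        have h1 : (0:ℚ) < (N : ℚ) * wq x :=
          mul_pos (by exact_mod_cast hNpos) (hwqpos x)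
        rw [← hz x] at h1
        exact_mod_cast h1
      refine ⟨1, one_pos, fun _ x => (z x).toNat, ?_, ?_⟩
      · intro x
        refine ⟨0, ?_⟩
        show (z x).toNat ≠ 0
        have := hzpos x
        omega
      · intro _
        funext r
        have hq0 : ∑ x, wq x * ((S x r : ℤ) : ℚ) = 0 := hKker wq hwqK r
        have key : ∀ x, (((z x).toNat : ℤ) : ℚ) * ((S x r : ℤ) : ℚ)
            = (N : ℚ) * (wq x * ((S x r : ℤ) : ℚ)) := by
          intro x
          rw [Int.toNat_of_nonneg (hzpos x).le, hz x]
          ring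
        have h0 : ((∑ x, ((z x).toNat : ℤ) * S x r : ℤ) : ℚ) = 0 := by
          calc ((∑ x, ((z x).toNat : ℤ) * S x r : ℤ) : ℚ)
              = ∑ x, (((z x).toNat : ℤ) : ℚ) * ((S x r : ℤ) : ℚ) := by push_cast; rfl
            _ = ∑ x, (N : ℚ) * (wq x * ((S x r : ℤ) : ℚ)) :=
                Finset.sum_congr rfl fun x _ => key x
            _ = (N : ℚ) * ∑ x, wq x * ((S x r : ℤ) : ℚ) := (Finset.mul_sum _ _ _).symm
            _ = 0 := by rw [hq0, mul_zero]
        have hfin : ∑ x, ((z x).toNat : ℤ) * S x r = 0 := by exact_mod_cast h0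
        simpa [Matrix.vecMul, dotProduct] using hfin
end

section
/- The relation ⇌ on species X, defined by x ⇌ y iff x = y or the network admits a net isomerization reaction kx → ky for some k ∈ ℕ, is an equivalence relation. -/
open Matrix BigOperators

/-- The relation `x ⇌ y` (`x = y` or the network admits a net
isomerization reaction `k x → k y`) is an equivalence relation. -/
theorem obligatory_isomer_equivalence
    {X R : Type*} [Fintype X] [Fintype R] [DecidableEq X]
    (S : Matrix X R ℤ) :
    Equivalence (fun x y : X => x = y ∨
      (x ≠ y ∧ ∃ (k : ℕ) (v : R → ℤ), 0 < k ∧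
        S.mulVec v x = -(k : ℤ) ∧ S.mulVec v y = (k : ℤ) ∧
        ∀ z, z ≠ x → z ≠ y → S.mulVec v z = 0)) := by
  constructor
  · intro x; exact Or.inl rfl
  · rintro x y (rfl | ⟨hxy, k, v, hk, hx, hy, hz⟩)
    · exact Or.inl rfl
    · refine Or.inr ⟨hxy.symm, k, -v, hk, ?_, ?_, ?_⟩
      · rw [Matrix.mulVec_neg, Pi.neg_apply, hy]
      · rw [Matrix.mulVec_neg, Pi.neg_apply, hx]; ring
      · intro z hzy hzx
        rw [Matrix.mulVec_neg, Pi.neg_apply, hz z hzx hzy]; ring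
  · rintro x y z (rfl | ⟨hxy, k₁, v₁, hk₁, hx₁, hy₁, hz₁⟩) h₂
    · exact h₂
    rcases h₂ with rfl | ⟨hyz, k₂, v₂, hk₂, hy₂, hz₂, hw₂⟩
    · exact Or.inr ⟨hxy, k₁, v₁, hk₁, hx₁, hy₁, hz₁⟩
    by_cases hxz : x = z
    · exact Or.inl hxz
    refine Or.inr ⟨hxz, k₁ * k₂, (k₂ : ℤ) • v₁ + (k₁ : ℤ) • v₂,
      Nat.mul_pos hk₁ hk₂, ?_, ?_, ?_⟩
    · rw [Matrix.mulVec_add, Matrix.mulVec_smul, Matrix.mulVec_smul,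
        Pi.add_apply, Pi.smul_apply, Pi.smul_apply, hx₁,
        hw₂ x hxy hxz]
      simp only [smul_eq_mul]; push_cast; ring
    · rw [Matrix.mulVec_add, Matrix.mulVec_smul, Matrix.mulVec_smul,
        Pi.add_apply, Pi.smul_apply, Pi.smul_apply, hz₂,
        hz₁ z (Ne.symm hxz) (Ne.symm hyz)]
      simp only [smul_eq_mul]; push_cast; ring
    · intro w hwx hwz
      by_cases hwy : w = y
      · subst hwy
        rw [Matrix.mulVec_add, Matrix.mulVec_smul, Matrix.mulVec_smul,
          Pi.add_apply, Pi.smul_apply, Pi.smul_apply, hy₁, hy₂]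
        simp only [smul_eq_mul]; push_cast; ring
      · rw [Matrix.mulVec_add, Matrix.mulVec_smul, Matrix.mulVec_smul,
          Pi.add_apply, Pi.smul_apply, Pi.smul_apply,
          hz₁ w hwx hwy, hw₂ w hwy hwz]
        simp only [smul_eq_mul]; push_cast; ring
end

section
/- For species x, y of a reaction network with stoichiometric matrix S, x ⇌ y (x = y or x and y are obligatory isomers) holds if and only if m_x = m_y for every m ∈ ker Sᵀ. -/
open Matrix BigOperators

lemma aux_mem_range {F X R : Type*} [Field F] [Fintype X] [Fintype R] [DecidableEq X]
    [DecidableEq R] (A : Matrix X R F) (w : X → F)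
    (h : ∀ m : X → F, Matrix.vecMul m A = 0 → m ⬝ᵥ w = 0) :
    ∃ v : R → F, A.mulVec v = w := by
  by_contra hc
  push_neg at hc
  set U := LinearMap.range A.mulVecLin with hU
  have hw : w ∉ U := by
    rintro ⟨v, rfl⟩
    exact hc v rfl
  have hne : (Submodule.Quotient.mk w : (X → F) ⧸ U) ≠ 0 := by
    simpa [Submodule.Quotient.mk_eq_zero] using hw
  obtain ⟨φ, hφ⟩ : ∃ φ : Module.Dual F ((X → F) ⧸ U),
      φ (Submodule.Quotient.mk w) ≠ 0 := by
    by_contra h'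
    push_neg at h'
    exact hne ((Module.forall_dual_apply_eq_zero_iff F _).mp h')
  set f : (X → F) →ₗ[F] F := φ.comp U.mkQ with hf
  set m : X → F := fun z => f (Pi.single z 1) with hm
  have key : ∀ u : X → F, f u = m ⬝ᵥ u := by
    intro u
    have hrep : u = ∑ z, u z • (Pi.single z 1 : X → F) := by
      funext t
      simp [Pi.single_apply, Finset.sum_apply, mul_ite]
    calc f u = f (∑ z, u z • (Pi.single z 1 : X → F)) := by rw [← hrep]
    _ = ∑ z, u z * f (Pi.single z 1) := by rw [map_sum]; simp
    _ = m ⬝ᵥ u := by simp [dotProduct, hm, mul_comm]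
  have hker : Matrix.vecMul m A = 0 := by
    funext r
    have h1 : Matrix.vecMul m A r = m ⬝ᵥ (fun z => A z r) := by
      simp [Matrix.vecMul, dotProduct]
    have h2 : (fun z => A z r) = A.mulVec (Pi.single r 1) := by
      funext z
      simp [Matrix.mulVec_single]
    have h3 : f (A.mulVec (Pi.single r 1)) = 0 := by
      have : A.mulVec (Pi.single r 1) ∈ U := ⟨Pi.single r 1, rfl⟩
      rw [hf, LinearMap.comp_apply, Submodule.mkQ_apply,
        (Submodule.Quotient.mk_eq_zero U).mpr this, map_zero]
    rw [Pi.zero_apply, h1, h2, ← key, h3]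
  have hfw : f w = 0 := by rw [key]; exact h m hker
  exact hφ hfw

/-- `x ⇌ y` holds iff `m x = m y` for every `m ∈ ker Sᵀ`. -/
theorem obligatory_isomer_iff_kernel
    {X R : Type*} [Fintype X] [Fintype R] [DecidableEq X]
    (S : Matrix X R ℤ) (x y : X) :
    (x = y ∨
      (x ≠ y ∧ ∃ (k : ℕ) (v : R → ℤ), 0 < k ∧
        S.mulVec v x = -(k : ℤ) ∧ S.mulVec v y = (k : ℤ) ∧
        ∀ z, z ≠ x → z ≠ y → S.mulVec v z = 0)) ↔
      ∀ m : X → ℝ, Matrix.vecMul m (S.map (Int.cast : ℤ → ℝ)) = 0 →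
        m x = m y := by
  haveI := Classical.decEq R
  constructor
  · rintro (rfl | ⟨hxy, k, v, hk, hx, hy, hz⟩) m hm
    · rfl
    · have hdp : m ⬝ᵥ (fun z => ((S.mulVec v z : ℤ) : ℝ)) = 0 := by
        have h1 : (fun z => ((S.mulVec v z : ℤ) : ℝ))
            = (S.map (Int.cast : ℤ → ℝ)).mulVec (fun r => ((v r : ℤ) : ℝ)) := by
          funext z
          exact RingHom.map_mulVec (Int.castRingHom ℝ) S v z
        rw [h1, Matrix.dotProduct_mulVec, hm, zero_dotProduct]
      have hsum : ∑ z, m z * ((S.mulVec v z : ℤ) : ℝ)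
          = ∑ z ∈ ({x, y} : Finset X), m z * ((S.mulVec v z : ℤ) : ℝ) := by
        refine (Finset.sum_subset (Finset.subset_univ _) ?_).symm
        intro z _ hzmem
        simp only [Finset.mem_insert, Finset.mem_singleton, not_or] at hzmem
        rw [hz z hzmem.1 hzmem.2, Int.cast_zero, mul_zero]
      have hpair : ∑ z ∈ ({x, y} : Finset X), m z * ((S.mulVec v z : ℤ) : ℝ)
          = m x * (-(k : ℝ)) + m y * (k : ℝ) := by
        rw [Finset.sum_pair hxy, hx, hy]
        push_cast
        ring
      have h0 : m x * (-(k : ℝ)) + m y * (k : ℝ) = 0 := by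
        rw [← hpair, ← hsum]
        simpa [dotProduct] using hdp
      have hkR : (k : ℝ) ≠ 0 := Nat.cast_ne_zero.mpr hk.ne'
      have : (m y - m x) * (k : ℝ) = 0 := by linarith [h0]
      rcases mul_eq_zero.mp this with h | h
      · linarith
      · exact absurd h hkR
  · intro h
    by_cases hxy : x = y
    · exact Or.inl hxy
    refine Or.inr ⟨hxy, ?_⟩
    set A : Matrix X R ℚ := S.map (Int.cast : ℤ → ℚ) with hA
    set w : X → ℚ := Pi.single y 1 - Pi.single x 1 with hw
    obtain ⟨v, hv⟩ : ∃ v : R → ℚ, A.mulVec v = w := by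
      apply aux_mem_range
      intro m hm
      have hmR : Matrix.vecMul (fun z => ((m z : ℚ) : ℝ))
          (S.map (Int.cast : ℤ → ℝ)) = 0 := by
        funext r
        have hAm : A.map (Rat.cast : ℚ → ℝ) = S.map (Int.cast : ℤ → ℝ) := by
          rw [hA, Matrix.map_map]
          ext i j
          simp
        have h1 : ((Matrix.vecMul m A r : ℚ) : ℝ)
            = Matrix.vecMul (fun z => ((m z : ℚ) : ℝ)) (A.map (Rat.cast : ℚ → ℝ)) r :=
          RingHom.map_vecMul (Rat.castHom ℝ) A m r
        rw [Pi.zero_apply, ← hAm, ← h1, hm, Pi.zero_apply, Rat.cast_zero]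
      have := h _ hmR
      have hmxy : m x = m y := by exact_mod_cast this
      rw [hw]
      simp [dotProduct_sub, dotProduct_single, hmxy]
    -- clear denominators
    obtain ⟨b, hb⟩ := IsLocalization.exist_integer_multiples_of_finite
      (nonZeroDivisors ℤ) v
    choose c hc using hb
    have hbne : (b : ℤ) ≠ 0 := nonZeroDivisors.coe_ne_zero b
    set N : ℤ := (b : ℤ) ^ 2 with hN
    have hNpos : 0 < N := by positivity
    set v' : R → ℤ := fun r => (b : ℤ) * c r with hv'
    have hcast : ∀ r, ((v' r : ℤ) : ℚ) = (N : ℚ) * v r := by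
      intro r
      have := hc r
      simp only [Algebra.smul_def, algebraMap_int_eq, eq_intCast] at this
      rw [hv']
      push_cast
      rw [this, hN]
      push_cast
      ring
    have hmain : ∀ z, ((S.mulVec v' z : ℤ) : ℚ) = (N : ℚ) * w z := by
      intro z
      have h0 : ((S.mulVec v' z : ℤ) : ℚ)
          = ((S.map (Int.cast : ℤ → ℚ)).mulVec (fun r => ((v' r : ℤ) : ℚ))) z :=
        RingHom.map_mulVec (Int.castRingHom ℚ) S v' z
      have h3 : (fun r => ((v' r : ℤ) : ℚ)) = (N : ℚ) • v := by
        funext r; rw [hcast r]; simp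
      rw [h0, h3, Matrix.mulVec_smul, ← hA, hv]
      simp
    have hwx : w x = -1 := by rw [hw]; simp [Pi.single_eq_of_ne hxy]
    have hwy : w y = 1 := by rw [hw]; simp [Pi.single_eq_of_ne (Ne.symm hxy)]
    refine ⟨N.toNat, v', by omega, ?_, ?_, ?_⟩
    · have hx := hmain x
      rw [hwx] at hx
      have hx' : S.mulVec v' x = -N := by
        have : ((S.mulVec v' x : ℤ) : ℚ) = ((-N : ℤ) : ℚ) := by rw [hx]; push_cast; ring
        exact_mod_cast this
      rw [hx']; omega
    · have hy := hmain y
      rw [hwy] at hy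
      have hy' : S.mulVec v' y = N := by
        have : ((S.mulVec v' y : ℤ) : ℚ) = ((N : ℤ) : ℚ) := by rw [hy]; ring
        exact_mod_cast this
      rw [hy']; omega
    · intro z hzx hzy
      have hwz : w z = 0 := by rw [hw]; simp [Pi.single_eq_of_ne hzx, Pi.single_eq_of_ne hzy]
      have hz := hmain z
      rw [hwz, mul_zero] at hz
      exact_mod_cast hz
end

section
/- Let A ∈ ℕ₀^{𝒜×X} be a sum-formula instance of a reaction network with stoichiometric matrix S such that im Aᵀ = ker Sᵀ. Then x and y are obligatory isomers if and only if A_{ax} = A_{ay} for all a ∈ 𝒜. If only im Aᵀ ⊆ ker Sᵀ, then obligatory isomery implies equal columns. -/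
open Matrix BigOperators

/-- Core: a nonnegative-integer left-kernel vector of `S` takes equal values at
`x` and `y` when there is an exchange vector between them. -/
lemma sf_core {X R : Type*} [Fintype X] [Fintype R] [DecidableEq X]
    (S : Matrix X R ℤ) (w : X → ℤ)
    (hw : Matrix.vecMul w S = 0)
    {x y : X} (hxy : x ≠ y) {k : ℕ} {v : R → ℤ} (hk : 0 < k)
    (hx : S.mulVec v x = -(k : ℤ)) (hy : S.mulVec v y = (k : ℤ))
    (hz : ∀ z, z ≠ x → z ≠ y → S.mulVec v z = 0) : w x = w y := by
  have h0 : w ⬝ᵥ S.mulVec v = 0 := by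
    rw [Matrix.dotProduct_mulVec, hw, zero_dotProduct]
  have hsum : (∑ z ∈ ({x, y} : Finset X), w z * S.mulVec v z)
      = ∑ z, w z * S.mulVec v z := by
    refine Finset.sum_subset (Finset.subset_univ _) ?_
    intro z _ hzmem
    simp only [Finset.mem_insert, Finset.mem_singleton, not_or] at hzmem
    rw [hz z hzmem.1 hzmem.2, mul_zero]
  have h1 : w x * S.mulVec v x + w y * S.mulVec v y = 0 := by
    have hp := Finset.sum_pair (f := fun z => w z * S.mulVec v z) hxy
    rw [← hp, hsum] at *
    exact h0
  rw [hx, hy] at h1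
  have hk' : (k : ℤ) ≠ 0 := by exact_mod_cast hk.ne'
  have h2 : (w y - w x) * (k : ℤ) = 0 := by ring_nf; linarith
  rcases mul_eq_zero.mp h2 with h3 | h3
  · linarith [sub_eq_zero.mp h3]
  · exact absurd h3 hk'

/-- For a sum-formula instance `A` of a RN with stoichiometric
matrix `S`: if `im Aᵀ = ker Sᵀ`, then `x ⇌ y` iff the columns of `A` at `x`
and `y` coincide; if only `im Aᵀ ⊆ ker Sᵀ`, then `x ⇌ y` implies equal
columns. -/
theorem sf_instance_detects_obligatory_isomers
    {X R A : Type*} [Fintype X] [Fintype R] [Fintype A] [Nonempty A]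
    [DecidableEq X]
    (S : Matrix X R ℤ) (M : A → X → ℕ)
    (hcol : ∀ x, ∃ a, M a x ≠ 0)
    (hker : ∀ a, Matrix.vecMul (fun x => (M a x : ℤ)) S = 0) :
    ((∀ m : X → ℝ,
        (Matrix.vecMul m (S.map (Int.cast : ℤ → ℝ)) = 0 ↔
          ∃ c : A → ℝ, m = fun x => ∑ a, c a * (M a x : ℝ))) →
      ∀ x y : X,
        ((x = y ∨ (x ≠ y ∧ ∃ (k : ℕ) (v : R → ℤ), 0 < k ∧
            S.mulVec v x = -(k : ℤ) ∧ S.mulVec v y = (k : ℤ) ∧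
            ∀ z, z ≠ x → z ≠ y → S.mulVec v z = 0)) ↔
          ∀ a, M a x = M a y)) ∧
    ((∀ m : X → ℝ,
        (∃ c : A → ℝ, m = fun x => ∑ a, c a * (M a x : ℝ)) →
          Matrix.vecMul m (S.map (Int.cast : ℤ → ℝ)) = 0) →
      ∀ x y : X,
        (x = y ∨ (x ≠ y ∧ ∃ (k : ℕ) (v : R → ℤ), 0 < k ∧
            S.mulVec v x = -(k : ℤ) ∧ S.mulVec v y = (k : ℤ) ∧
            ∀ z, z ≠ x → z ≠ y → S.mulVec v z = 0)) →
          ∀ a, M a x = M a y) := by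
  classical
  -- forward implication: ⇌ implies equal columns (needs only `hker`)
  have fwd : ∀ x y : X,
      (x = y ∨ (x ≠ y ∧ ∃ (k : ℕ) (v : R → ℤ), 0 < k ∧
          S.mulVec v x = -(k : ℤ) ∧ S.mulVec v y = (k : ℤ) ∧
          ∀ z, z ≠ x → z ≠ y → S.mulVec v z = 0)) →
        ∀ a, M a x = M a y := by
    rintro x y (rfl | ⟨hxy, k, v, hk, hx, hy, hz⟩) a
    · rfl
    · have h2 : ((M a x : ℤ)) = ((M a y : ℤ)) :=
        sf_core S (fun z => (M a z : ℤ)) (hker a) hxy hk hx hy hz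
      exact_mod_cast h2
  refine ⟨fun hm x y => ⟨fwd x y, fun h => ?_⟩, fun _ => fwd⟩
  by_cases hxy : x = y
  · exact Or.inl hxy
  refine Or.inr ⟨hxy, ?_⟩
  -- set up the rational system
  set SQ : Matrix X R ℚ := S.map (Int.cast : ℤ → ℚ) with hSQ
  set w : X → ℚ := Pi.single y 1 - Pi.single x 1 with hwdef
  -- w is in the range of SQ.mulVecLin
  have hwmem : w ∈ LinearMap.range SQ.mulVecLin := by
    by_contra hnm
    obtain ⟨f, hf1, hf2⟩ := Submodule.exists_dual_map_eq_bot_of_notMem hnm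
      Module.Projective.of_free
    have hf0 : ∀ u : R → ℚ, f (SQ.mulVec u) = 0 := by
      intro u
      have : f (SQ.mulVec u) ∈ (LinearMap.range SQ.mulVecLin).map f :=
        Submodule.mem_map_of_mem (LinearMap.mem_range_self _ u)
      rw [hf2] at this
      exact this
    set mQ : X → ℚ := fun z => f (Pi.single z 1) with hmQ
    have hfeq : ∀ m : X → ℚ, f m = ∑ z, m z * mQ z := by
      intro m
      have hrep : m = ∑ z, m z • (Pi.single z 1 : X → ℚ) := by
        ext j
        simp [Pi.single_apply, Finset.sum_apply]
      conv_lhs => rw [hrep]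
      rw [map_sum]
      simp [smul_eq_mul]
      rfl
    -- mQ is in the left kernel of SQ
    have hmker : Matrix.vecMul mQ SQ = 0 := by
      ext r
      have hcolr : SQ.mulVec (Pi.single r 1) = fun z => SQ z r := by
        rw [Matrix.mulVec_single_one]; rfl
      have := hf0 (Pi.single r 1)
      rw [hcolr, hfeq] at this
      have hvm : Matrix.vecMul mQ SQ r = ∑ z, mQ z * SQ z r := rfl
      rw [hvm, Pi.zero_apply]
      rw [← this]
      exact Finset.sum_congr rfl fun z _ => mul_comm _ _
    -- the real version of mQ is in the left kernel of the real S
    have hmkerR : Matrix.vecMul (fun z => ((mQ z : ℚ) : ℝ)) (S.map (Int.cast : ℤ → ℝ)) = 0 := by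
      ext r
      have h1 : Matrix.vecMul mQ SQ r = 0 := by rw [hmker]; rfl
      have h2 : Matrix.vecMul mQ SQ r = ∑ z, mQ z * ((S z r : ℤ) : ℚ) := rfl
      have h3 : Matrix.vecMul (fun z => ((mQ z : ℚ) : ℝ)) (S.map (Int.cast : ℤ → ℝ)) r
          = ∑ z, ((mQ z : ℚ) : ℝ) * ((S z r : ℤ) : ℝ) := rfl
      rw [h3, Pi.zero_apply]
      rw [h2] at h1
      have : ((∑ z, mQ z * ((S z r : ℤ) : ℚ) : ℚ) : ℝ) = 0 := by rw [h1]; norm_num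
      push_cast at this
      convert this using 2
    obtain ⟨c, hc⟩ := (hm _).mp hmkerR
    -- equal columns force mQ x = mQ y
    have hmx : mQ x = mQ y := by
      have hx' : ((mQ x : ℚ) : ℝ) = ∑ a, c a * (M a x : ℝ) := congrFun hc x
      have hy' : ((mQ y : ℚ) : ℝ) = ∑ a, c a * (M a y : ℝ) := congrFun hc y
      have : ((mQ x : ℚ) : ℝ) = ((mQ y : ℚ) : ℝ) := by
        rw [hx', hy']
        exact Finset.sum_congr rfl fun a _ => by rw [h a]
      exact_mod_cast this
    -- but f w ≠ 0 says mQ y ≠ mQ x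
    apply hf1
    rw [hwdef, map_sub]
    show f (Pi.single y 1) - f (Pi.single x 1) = 0
    change mQ y - mQ x = 0
    rw [hmx, sub_self]
  -- extract a rational solution and clear denominators
  obtain ⟨u, hu⟩ := hwmem
  obtain ⟨b, hb⟩ := IsLocalization.exist_integer_multiples_of_finite
    (nonZeroDivisors ℤ) u
  choose n hn using hb
  have hbne : (b : ℤ) ≠ 0 := nonZeroDivisors.coe_ne_zero b
  have hcast : ∀ r, ((n r : ℤ) : ℚ) = ((b : ℤ) : ℚ) * u r := by
    intro r
    have h := hn r
    rw [Algebra.smul_def] at h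
    simpa [eq_intCast] using h
  have huw : SQ.mulVec u = w := hu
  have hmain : ∀ z, ((S.mulVec n z : ℤ) : ℚ) = ((b : ℤ) : ℚ) * w z := by
    intro z
    have h1 : ((S.mulVec n z : ℤ) : ℚ) = ∑ r, ((S z r : ℤ) : ℚ) * ((n r : ℤ) : ℚ) := by
      simp only [Matrix.mulVec, dotProduct]
      push_cast
      rfl
    rw [h1]
    have h2 : ∑ r, ((S z r : ℤ) : ℚ) * ((n r : ℤ) : ℚ)
        = ((b : ℤ) : ℚ) * ∑ r, ((S z r : ℤ) : ℚ) * u r := by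
      rw [Finset.mul_sum]
      exact Finset.sum_congr rfl fun r _ => by rw [hcast r]; ring
    rw [h2, show (∑ r, ((S z r : ℤ) : ℚ) * u r) = SQ.mulVec u z from rfl, huw]
  have hwx : w x = -1 := by
    simp [hwdef, Pi.single_apply, Ne.symm hxy]
  have hwy : w y = 1 := by
    simp [hwdef, Pi.single_apply, hxy]
  have hwz : ∀ z, z ≠ x → z ≠ y → w z = 0 := by
    intro z hzx hzy
    simp [hwdef, Pi.single_apply, hzx, hzy]
  have hxZ : S.mulVec n x = -(b : ℤ) := by
    have h := hmain x
    rw [hwx] at h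
    have : ((S.mulVec n x : ℤ) : ℚ) = ((-(b : ℤ) : ℤ) : ℚ) := by rw [h]; push_cast; ring
    exact_mod_cast this
  have hyZ : S.mulVec n y = (b : ℤ) := by
    have h := hmain y
    rw [hwy] at h
    have : ((S.mulVec n y : ℤ) : ℚ) = (((b : ℤ) : ℤ) : ℚ) := by rw [h]; push_cast; ring
    exact_mod_cast this
  have hzZ : ∀ z, z ≠ x → z ≠ y → S.mulVec n z = 0 := by
    intro z hzx hzy
    have h := hmain z
    rw [hwz z hzx hzy, mul_zero] at h
    exact_mod_cast h
  rcases hbne.lt_or_gt with hneg | hpos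
  · refine ⟨(-(b : ℤ)).toNat, fun r => -(n r), by omega, ?_, ?_, ?_⟩
    · rw [show (fun r => -(n r)) = -n from rfl, Matrix.mulVec_neg, Pi.neg_apply, hxZ]
      have ht : (((-(b : ℤ)).toNat : ℕ) : ℤ) = -(b : ℤ) := Int.toNat_of_nonneg (by linarith)
      omega
    · rw [show (fun r => -(n r)) = -n from rfl, Matrix.mulVec_neg, Pi.neg_apply, hyZ]
      have ht : (((-(b : ℤ)).toNat : ℕ) : ℤ) = -(b : ℤ) := Int.toNat_of_nonneg (by linarith)
      omega
    · intro z hzx hzy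
      rw [show (fun r => -(n r)) = -n from rfl, Matrix.mulVec_neg, Pi.neg_apply,
        hzZ z hzx hzy, neg_zero]
  · refine ⟨(b : ℤ).toNat, n, by omega, ?_, ?_, ?_⟩
    · rw [hxZ]
      have ht : (((b : ℤ).toNat : ℕ) : ℤ) = (b : ℤ) := Int.toNat_of_nonneg (by linarith)
      omega
    · rw [hyZ]
      have ht : (((b : ℤ).toNat : ℕ) : ℤ) = (b : ℤ) := Int.toNat_of_nonneg (by linarith)
      omega
    · exact hzZ
end

section
/- If the rows of the minimal-moiety representation M of a conservative reaction network are the minimal elements of 𝒦(S), then im Mᵀ = ker Sᵀ and hence the number of minimal moiety conservation laws is at least dim ker Sᵀ. -/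
open Matrix BigOperators

/-- A minimal moiety conservation law. -/
def MCLmin {X R : Type*} [Fintype X] [Fintype R] (S : Matrix X R ℤ) (y : X → ℕ) : Prop :=
  MCL S y ∧ ¬ ∃ y' : X → ℕ, MCL S y' ∧ y' ≤ y ∧ y' ≠ y

lemma rat_li_real {ι n : Type*} [Fintype ι] [Fintype n]
    (b : ι → (n → ℚ)) (hb : LinearIndependent ℚ b) :
    LinearIndependent ℝ (fun i => (fun x => ((b i x : ℚ) : ℝ))) := by
  classical
  rw [Fintype.linearIndependent_iff]
  intro c hc
  -- build a ℚ-linear left inverse of `d ↦ ∑ d i • b i`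
  let T : (ι → ℚ) →ₗ[ℚ] (n → ℚ) :=
    { toFun := fun d => ∑ i, d i • b i
      map_add' := by
        intro a b'
        simp [add_smul, Finset.sum_add_distrib]
      map_smul' := by
        intro r a
        simp [smul_smul, Finset.smul_sum] }
  have hTker : LinearMap.ker T = ⊥ := by
    rw [LinearMap.ker_eq_bot']
    intro d hd
    funext i
    exact Fintype.linearIndependent_iff.mp hb d hd i
  obtain ⟨g, hg⟩ := T.exists_leftInverse_of_injective hTker
  have hgb : ∀ i, g (b i) = Pi.single i 1 := by
    intro i
    have h1 : T (Pi.single i (1:ℚ)) = b i := by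
      simp only [T, LinearMap.coe_mk, AddHom.coe_mk]
      rw [Finset.sum_eq_single i]
      · simp
      · intro k _ hk; simp [Pi.single_apply, hk]
      · simp
    have := LinearMap.congr_fun hg (Pi.single i (1:ℚ))
    rw [LinearMap.comp_apply, h1] at this
    simpa using this
  set C : Matrix ι n ℚ := Matrix.of (fun i x => g (Pi.single x 1) i) with hC
  have hCg : ∀ v : n → ℚ, ∀ i, ∑ x, C i x * v x = g v i := by
    intro v i
    have hv : v = ∑ x, v x • (Pi.single x (1:ℚ) : n → ℚ) := by
      funext y
      simp [Pi.single_apply]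
    calc ∑ x, C i x * v x = (∑ x, v x • g (Pi.single x 1)) i := by
          simp [hC, Finset.sum_apply, mul_comm]
      _ = g v i := by
          have hmap : g v = ∑ x, v x • g (Pi.single x 1) := by
            conv_lhs => rw [hv]
            rw [map_sum]
            simp_rw [_root_.map_smul]
          rw [hmap]
  intro i0
  have hcx : ∀ x : n, ∑ i, c i * ((b i x : ℚ) : ℝ) = 0 := by
    intro x
    have := congr_fun hc x
    simpa [Finset.sum_apply] using this
  have hgbR : ∀ i, ∑ x, ((C i0 x : ℚ):ℝ) * ((b i x : ℚ):ℝ)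
      = (((Pi.single i (1:ℚ) : ι → ℚ) i0) : ℝ) := by
    intro i
    have h2 : ((∑ x, C i0 x * b i x : ℚ) : ℝ) = (((Pi.single i (1:ℚ) : ι → ℚ) i0) : ℝ) := by
      rw [hCg (b i) i0, hgb i]
    rw [← h2]
    push_cast
    rfl
  have key : (0:ℝ) = c i0 := by
    calc (0:ℝ) = ∑ x, ((C i0 x : ℚ):ℝ) * ∑ i, c i * ((b i x:ℚ):ℝ) := by
          simp [hcx]
      _ = ∑ i, c i * ∑ x, ((C i0 x : ℚ):ℝ) * ((b i x:ℚ):ℝ) := by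
          simp_rw [Finset.mul_sum]
          rw [Finset.sum_comm]
          apply Finset.sum_congr rfl
          intro i _
          apply Finset.sum_congr rfl
          intro x _
          ring
      _ = ∑ i, c i * (((Pi.single i (1:ℚ) : ι → ℚ) i0) : ℝ) := by
          simp_rw [hgbR]
      _ = c i0 := by
          rw [Finset.sum_eq_single i0]
          · simp
          · intro k _ hk; simp [Pi.single_apply, hk]
          · simp
  exact key.symm

lemma finrank_ker_le {X R : Type*} [Fintype X] [Fintype R] (S : Matrix X R ℤ) :
    Module.finrank ℝ (LinearMap.ker (Matrix.vecMulLinear (S.map (Int.cast : ℤ → ℝ)))) ≤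
      Module.finrank ℚ (LinearMap.ker (Matrix.vecMulLinear (S.map (Int.cast : ℤ → ℚ)))) := by
  classical
  set Sq := S.map (Int.cast : ℤ → ℚ)
  set Sr := S.map (Int.cast : ℤ → ℝ)
  obtain ⟨t, hts, htsp, htli⟩ :=
    exists_linearIndependent ℚ (Set.range (fun x : X => fun j : R => Sq x j))
  have htfin : t.Finite := (Set.finite_range _).subset hts
  haveI : Fintype t := htfin.fintype
  -- rank over ℚ equals card t
  have hrq : Module.finrank ℚ (LinearMap.range (Matrix.vecMulLinear Sq)) = Fintype.card t := by
    rw [range_vecMulLinear]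
    have : Set.range ((↑) : t → (R → ℚ)) = t := Subtype.range_coe
    have h1 := finrank_span_eq_card htli
    rw [this] at h1
    rw [show (Set.range fun x : X => (Sq x : R → ℚ)) = Set.range Sq.row from rfl] at htsp
    rw [← htsp, h1]
  -- transferred family is linearly independent in range over ℝ
  have hli : LinearIndependent ℝ (fun v : t => (fun j : R => (((v : R → ℚ) j : ℚ) : ℝ))) :=
    rat_li_real _ htli
  have hmem : ∀ v : t, (fun j : R => (((v : R → ℚ) j : ℚ) : ℝ)) ∈
      LinearMap.range (Matrix.vecMulLinear Sr) := by
    rintro ⟨v, hv⟩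
    obtain ⟨x, hx⟩ := hts hv
    rw [range_vecMulLinear]
    apply Submodule.subset_span
    refine ⟨x, ?_⟩
    funext j
    have := congr_fun hx j
    simp only [Sq] at this
    simp [Sr, Matrix.map_apply, ← this]
  have hcard : Fintype.card t ≤ Module.finrank ℝ (LinearMap.range (Matrix.vecMulLinear Sr)) := by
    let b' : t → LinearMap.range (Matrix.vecMulLinear Sr) := fun v => ⟨_, hmem v⟩
    have hli' : LinearIndependent ℝ b' := by
      apply LinearIndependent.of_comp (LinearMap.range (Matrix.vecMulLinear Sr)).subtype
      exact hli
    exact hli'.fintype_card_le_finrank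
  have hq := LinearMap.finrank_range_add_finrank_ker (Matrix.vecMulLinear Sq)
  have hr := LinearMap.finrank_range_add_finrank_ker (Matrix.vecMulLinear Sr)
  rw [Module.finrank_fintype_fun_eq_card] at hq hr
  omega

lemma ker_real_eq_span {X R : Type*} [Fintype X] [Fintype R] (S : Matrix X R ℤ) :
    ∃ (m : ℕ) (b : Fin m → (X → ℚ)),
      (∀ i, Matrix.vecMul (b i) (S.map (Int.cast : ℤ → ℚ)) = 0) ∧
      LinearMap.ker (Matrix.vecMulLinear (S.map (Int.cast : ℤ → ℝ))) =
        Submodule.span ℝ (Set.range (fun i => (fun x => ((b i x : ℚ) : ℝ)))) := by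
  classical
  set Sq := S.map (Int.cast : ℤ → ℚ) with hSq
  set Sr := S.map (Int.cast : ℤ → ℝ) with hSr
  set Kq := LinearMap.ker (Matrix.vecMulLinear Sq) with hKq
  set n := Module.finrank ℚ Kq with hn
  let bb : Module.Basis (Fin n) ℚ Kq := Module.finBasis ℚ Kq
  refine ⟨n, fun i => (bb i : X → ℚ), ?_, ?_⟩
  · intro i
    exact LinearMap.mem_ker.mp (bb i).2
  · have hli : LinearIndependent ℚ (fun i => ((bb i : X → ℚ))) := by
      have := bb.linearIndependent
      exact this.map' Kq.subtype (Submodule.ker_subtype Kq)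
    have hliR : LinearIndependent ℝ (fun i => (fun x => (((bb i : X → ℚ) x : ℚ) : ℝ))) :=
      rat_li_real _ hli
    have hspan_le : Submodule.span ℝ (Set.range (fun i => (fun x => (((bb i : X → ℚ) x : ℚ) : ℝ))))
        ≤ LinearMap.ker (Matrix.vecMulLinear Sr) := by
      rw [Submodule.span_le]
      rintro - ⟨i, rfl⟩
      rw [SetLike.mem_coe, LinearMap.mem_ker, Matrix.vecMulLinear_apply]
      -- cast the rational kernel identity
      have hq : Matrix.vecMul ((bb i : X → ℚ)) Sq = 0 := LinearMap.mem_ker.mp (bb i).2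
      have hSrq : Sr = Sq.map ⇑(Rat.castHom ℝ) := by
        ext x j
        simp [Sq, Sr, Matrix.map_apply]
      rw [hSrq]
      have hfc : (fun x => (((bb i : X → ℚ) x : ℚ) : ℝ))
          = (Rat.castHom ℝ : ℚ → ℝ) ∘ ((bb i : X → ℚ)) := rfl
      beta_reduce
      rw [hfc]
      funext j
      rw [← RingHom.map_vecMul, congr_fun hq j]
      simp
    symm
    apply Submodule.eq_of_le_of_finrank_le hspan_le
    have hfr : Module.finrank ℝ (Submodule.span ℝ
        (Set.range (fun i => (fun x => (((bb i : X → ℚ) x : ℚ) : ℝ))))) = n := by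
      rw [finrank_span_eq_card hliR, Fintype.card_fin]
    rw [hfr]
    exact (finrank_ker_le S).trans_eq rfl

lemma rat_ker_int {X R : Type*} [Fintype X] [Fintype R] (S : Matrix X R ℤ)
    (v : X → ℚ) (hv : Matrix.vecMul v (S.map (Int.cast : ℤ → ℚ)) = 0) :
    ∃ (d : ℕ) (w : X → ℤ), 0 < d ∧ (∀ x, (w x : ℚ) = d * v x) ∧
      Matrix.vecMul w S = 0 := by
  classical
  set d : ℕ := ∏ x, (v x).den with hd
  have hdpos : 0 < d := Finset.prod_pos (fun x _ => (v x).pos)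
  have hz : ∀ x, ∃ z : ℤ, (z : ℚ) = d * v x := by
    intro x
    obtain ⟨k, hk⟩ : ((v x).den : ℕ) ∣ d := Finset.dvd_prod_of_mem _ (Finset.mem_univ x)
    refine ⟨(v x).num * k, ?_⟩
    have hnum := Rat.mul_den_eq_num (v x)
    rw [hk]
    push_cast
    rw [← hnum]
    ring
  choose w hw using hz
  refine ⟨d, w, hdpos, hw, ?_⟩
  have h0 : Matrix.vecMul (fun x => ((w x : ℤ) : ℚ)) (S.map (Int.cast : ℤ → ℚ)) = 0 := by
    have hwv : (fun x => ((w x : ℤ) : ℚ)) = (d : ℚ) • v := by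
      funext x
      rw [hw x]
      simp
    rw [hwv, ← Matrix.vecMulLinear_apply, _root_.map_smul, Matrix.vecMulLinear_apply, hv, smul_zero]
  funext j
  apply Int.cast_injective (α := ℚ)
  have h1 := RingHom.map_vecMul (Int.castRingHom ℚ) S w j
  have h2 : (⇑(Int.castRingHom ℚ) ∘ w ᵥ* S.map ⇑(Int.castRingHom ℚ)) j
      = ((fun x => ((w x : ℤ) : ℚ)) ᵥ* S.map (Int.cast : ℤ → ℚ)) j := rfl
  rw [h2, congr_fun h0 j] at h1
  simpa using h1

lemma exists_pos_nat_ker {X R : Type*} [Fintype X] [Fintype R] (S : Matrix X R ℤ)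
    (hcons : ∃ m : X → ℝ, (∀ x, 0 < m x) ∧
      Matrix.vecMul m (S.map (Int.cast : ℤ → ℝ)) = 0) :
    ∃ g : X → ℕ, (∀ x, 0 < g x) ∧
      Matrix.vecMul (fun x => ((g x : ℕ) : ℤ)) S = 0 := by
  classical
  obtain ⟨m, hmpos, hmker⟩ := hcons
  obtain ⟨nn, b, hbker, hkeq⟩ := ker_real_eq_span S
  have hm : m ∈ LinearMap.ker (Matrix.vecMulLinear (S.map (Int.cast : ℤ → ℝ))) := by
    rw [LinearMap.mem_ker, Matrix.vecMulLinear_apply]; exact hmker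
  rw [hkeq] at hm
  obtain ⟨c, hc⟩ := (Submodule.mem_span_range_iff_exists_fun ℝ).mp hm
  -- the open set of coefficient vectors giving positive combinations
  set U : Set (Fin nn → ℝ) := {e | ∀ x, 0 < ∑ i, e i * ((b i x : ℚ) : ℝ)} with hU
  have hUopen : IsOpen U := by
    have : U = ⋂ x, (fun e : Fin nn → ℝ => ∑ i, e i * ((b i x : ℚ) : ℝ)) ⁻¹' Set.Ioi 0 := by
      ext e; simp [hU, Set.mem_iInter]
    rw [this]
    exact isOpen_iInter_of_finite fun x =>
      (Continuous.isOpen_preimage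
        (continuous_finset_sum _ fun i _ => (continuous_apply i).mul continuous_const)
        _ isOpen_Ioi)
  have hcU : c ∈ U := by
    intro x
    have := congr_fun hc x
    simp only [Finset.sum_apply, Pi.smul_apply, smul_eq_mul] at this
    rw [this]
    exact hmpos x
  -- rational points are dense
  have hdense : Dense (Set.pi Set.univ fun _ : Fin nn => Set.range (Rat.cast : ℚ → ℝ)) :=
    dense_pi Set.univ fun i _ => Rat.denseRange_cast
  obtain ⟨e, heU, hep⟩ := hdense.inter_open_nonempty U hUopen ⟨c, hcU⟩
  have hq : ∀ i, ∃ q : ℚ, (q : ℝ) = e i := by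
    intro i
    exact hep i (Set.mem_univ i)
  choose q hqe using hq
  -- the rational kernel vector
  set v : X → ℚ := ∑ i, q i • b i with hv
  have hvker : Matrix.vecMul v (S.map (Int.cast : ℤ → ℚ)) = 0 := by
    rw [← Matrix.vecMulLinear_apply, hv, map_sum]
    simp only [_root_.map_smul, Matrix.vecMulLinear_apply]
    simp [hbker]
  have hvpos : ∀ x, 0 < v x := by
    intro x
    have hcast : ((v x : ℚ) : ℝ) = ∑ i, e i * ((b i x : ℚ) : ℝ) := by
      rw [hv]
      push_cast [Finset.sum_apply, Pi.smul_apply, smul_eq_mul]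
      exact Finset.sum_congr rfl fun i _ => by rw [hqe i]
    have := heU x
    rw [← hcast] at this
    exact_mod_cast this
  obtain ⟨d, w, hdpos, hwd, hwker⟩ := rat_ker_int S v hvker
  have hwpos : ∀ x, 0 < w x := by
    intro x
    have : (0 : ℚ) < (w x : ℚ) := by
      rw [hwd x]
      have h1 : (0:ℚ) < (d:ℚ) := by exact_mod_cast hdpos
      exact mul_pos h1 (hvpos x)
    exact_mod_cast this
  refine ⟨fun x => (w x).toNat, fun x => ?_, ?_⟩
  · exact Int.lt_toNat.mpr (hwpos x)
  · have : (fun x => (((w x).toNat : ℕ) : ℤ)) = w := by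
      funext x
      exact Int.toNat_of_nonneg (le_of_lt (hwpos x))
    rw [this, hwker]

lemma nat_ker_mem_span {X R 𝓜 : Type*} [Fintype X] [Fintype R] [Fintype 𝓜]
    (S : Matrix X R ℤ) (M : 𝓜 → X → ℕ)
    (hall : ∀ y : X → ℕ, MCLmin S y → ∃ i, M i = y) :
    ∀ y : X → ℕ, Matrix.vecMul (fun x => (y x : ℤ)) S = 0 →
      (fun x => (y x : ℝ)) ∈
        Submodule.span ℝ (Set.range (fun i => fun x => ((M i x : ℕ) : ℝ))) := by
  classical
  suffices h : ∀ N : ℕ, ∀ y : X → ℕ, ∑ x, y x ≤ N →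
      Matrix.vecMul (fun x => (y x : ℤ)) S = 0 →
      (fun x => (y x : ℝ)) ∈
        Submodule.span ℝ (Set.range (fun i => fun x => ((M i x : ℕ) : ℝ))) by
    intro y hy
    exact h (∑ x, y x) y le_rfl hy
  intro N
  induction N with
  | zero =>
    intro y hsum _
    have hy0 : y = 0 := by
      funext x
      have hx := Finset.single_le_sum (f := y) (fun i _ => Nat.zero_le _) (Finset.mem_univ x)
      simp only [Pi.zero_apply]
      omega
    rw [hy0]
    have : (fun x => (((0 : X → ℕ) x : ℕ) : ℝ)) = 0 := by funext x; simp
    rw [this]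
    exact Submodule.zero_mem _
  | succ N ih =>
    intro y hsum hker
    by_cases hy0 : y = 0
    · rw [hy0]
      have : (fun x => (((0 : X → ℕ) x : ℕ) : ℝ)) = 0 := by funext x; simp
      rw [this]
      exact Submodule.zero_mem _
    have hMCL : MCL S y := ⟨hy0, hker⟩
    by_cases hmin : MCLmin S y
    · obtain ⟨i, hi⟩ := hall y hmin
      apply Submodule.subset_span
      exact ⟨i, by funext x; simp [hi]⟩
    · have hex : ∃ y' : X → ℕ, MCL S y' ∧ y' ≤ y ∧ y' ≠ y := by
        by_contra hne
        exact hmin ⟨hMCL, hne⟩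
      obtain ⟨y', ⟨hy'0, hy'ker⟩, hle, hne⟩ := hex
      set y'' : X → ℕ := fun x => y x - y' x with hy''
      have hle' : ∀ x, y' x ≤ y x := fun x => hle x
      -- sums
      have hsum_add : ∑ x, y'' x + ∑ x, y' x = ∑ x, y x := by
        rw [← Finset.sum_add_distrib]
        exact Finset.sum_congr rfl fun x _ => Nat.sub_add_cancel (hle' x)
      have hy'pos : 0 < ∑ x, y' x := by
        by_contra hp
        push_neg at hp
        apply hy'0
        funext x
        have hx := Finset.single_le_sum (f := y') (fun i _ => Nat.zero_le _) (Finset.mem_univ x)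
        simp only [Pi.zero_apply]
        omega
      have hsum_lt : ∑ x, y' x < ∑ x, y x := by
        obtain ⟨x0, hx0⟩ : ∃ x0, y' x0 ≠ y x0 := by
          by_contra hq
          push_neg at hq
          exact hne (funext hq)
        refine Finset.sum_lt_sum (fun x _ => hle' x) ⟨x0, Finset.mem_univ x0, ?_⟩
        have := hle' x0
        omega
      -- kernel for y''
      have hker'' : Matrix.vecMul (fun x => (y'' x : ℤ)) S = 0 := by
        have hcast : (fun x => (y'' x : ℤ))
            = (fun x => (y x : ℤ)) - (fun x => (y' x : ℤ)) := by
          funext x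
          simp only [Pi.sub_apply, hy'']
          push_cast [Nat.cast_sub (hle' x)]
          ring
        rw [hcast, ← Matrix.vecMulLinear_apply, map_sub]
        simp only [Matrix.vecMulLinear_apply, hker, hy'ker, sub_zero]
      -- induction
      have h1 := ih y' (by omega) hy'ker
      have h2 := ih y'' (by omega) hker''
      have hsplit : (fun x => (y x : ℝ))
          = (fun x => (y' x : ℝ)) + (fun x => (y'' x : ℝ)) := by
        funext x
        simp only [Pi.add_apply, hy'']
        have := hle' x
        push_cast [Nat.cast_sub this]
        ring
      rw [hsplit]
      exact Submodule.add_mem _ h1 h2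

lemma int_ker_mem_span {X R 𝓜 : Type*} [Fintype X] [Fintype R] [Fintype 𝓜]
    (S : Matrix X R ℤ)
    (hcons : ∃ m : X → ℝ, (∀ x, 0 < m x) ∧
      Matrix.vecMul m (S.map (Int.cast : ℤ → ℝ)) = 0)
    (M : 𝓜 → X → ℕ)
    (hall : ∀ y : X → ℕ, MCLmin S y → ∃ i, M i = y)
    (w : X → ℤ) (hw : Matrix.vecMul w S = 0) :
    (fun x => (w x : ℝ)) ∈
      Submodule.span ℝ (Set.range (fun i => fun x => ((M i x : ℕ) : ℝ))) := by
  classical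
  obtain ⟨g, hgpos, hgker⟩ := exists_pos_nat_ker S hcons
  set N : ℕ := Finset.univ.sup fun x => (w x).natAbs with hN
  have hnn : ∀ x, 0 ≤ w x + (N : ℤ) * (g x : ℤ) := by
    intro x
    have h1 : (w x).natAbs ≤ N := Finset.le_sup (f := fun x => (w x).natAbs) (Finset.mem_univ x)
    have h2 : 1 ≤ g x := hgpos x
    have h3 : (N : ℤ) * 1 ≤ (N : ℤ) * (g x : ℤ) := by
      apply mul_le_mul_of_nonneg_left _ (Int.ofNat_nonneg N)
      exact_mod_cast h2
    omega
  set u : X → ℕ := fun x => (w x + (N : ℤ) * (g x : ℤ)).toNat with hu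
  have hucast : ∀ x, ((u x : ℕ) : ℤ) = w x + (N : ℤ) * (g x : ℤ) := by
    intro x
    exact Int.toNat_of_nonneg (hnn x)
  have huker : Matrix.vecMul (fun x => ((u x : ℕ) : ℤ)) S = 0 := by
    have : (fun x => ((u x : ℕ) : ℤ))
        = w + (N : ℤ) • (fun x => ((g x : ℕ) : ℤ)) := by
      funext x
      simp [hucast x]
    rw [this, ← Matrix.vecMulLinear_apply, map_add, _root_.map_smul]
    simp only [Matrix.vecMulLinear_apply, hw, hgker, smul_zero, add_zero]
  have h1 := nat_ker_mem_span S M hall u huker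
  have h2 := nat_ker_mem_span S M hall g hgker
  have hsplit : (fun x => (w x : ℝ))
      = (fun x => (u x : ℝ)) - (N : ℝ) • (fun x => (g x : ℝ)) := by
    funext x
    have := congr_arg (Int.cast : ℤ → ℝ) (hucast x)
    push_cast at this
    simp only [Pi.sub_apply, Pi.smul_apply, smul_eq_mul]
    linarith
  rw [hsplit]
  exact Submodule.sub_mem _ h1 (Submodule.smul_mem _ _ h2)
/-- If the rows of the minimal-moiety representation `M` of a
conservative RN are exactly the minimal elements of `𝒦(S)`, then
`im Mᵀ = ker Sᵀ` and the number of minimal MCLs is at least `dim ker Sᵀ`. -/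
theorem mm_representation_spans_left_kernel
    {X R 𝓜 : Type*} [Fintype X] [Fintype R] [Fintype 𝓜]
    (S : Matrix X R ℤ)
    (hcons : ∃ m : X → ℝ, (∀ x, 0 < m x) ∧
      Matrix.vecMul m (S.map (Int.cast : ℤ → ℝ)) = 0)
    (M : 𝓜 → X → ℕ)
    (hmin : ∀ i, MCLmin S (M i))
    (hall : ∀ y : X → ℕ, MCLmin S y → ∃ i, M i = y)
    (hinj : Function.Injective M) :
    (∀ m : X → ℝ,
      Matrix.vecMul m (S.map (Int.cast : ℤ → ℝ)) = 0 ↔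
        ∃ c : 𝓜 → ℝ, m = fun x => ∑ i, c i * (M i x : ℝ)) ∧
    Module.finrank ℝ
        (LinearMap.ker (Matrix.vecMulLinear (S.map (Int.cast : ℤ → ℝ)))) ≤
      Fintype.card 𝓜 := by
  classical
  set Sr := S.map (Int.cast : ℤ → ℝ) with hSr
  set V := Submodule.span ℝ (Set.range (fun i => fun x => ((M i x : ℕ) : ℝ))) with hV
  have hVker : V ≤ LinearMap.ker (Matrix.vecMulLinear Sr) := by
    rw [hV, Submodule.span_le]
    rintro - ⟨i, rfl⟩
    rw [SetLike.mem_coe, LinearMap.mem_ker, Matrix.vecMulLinear_apply]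
    have hz := (hmin i).1.2
    funext j
    have hz' := congr_fun hz j
    simp only [Matrix.vecMul, dotProduct, Pi.zero_apply] at hz' ⊢
    have hc := congr_arg (Int.cast : ℤ → ℝ) hz'
    push_cast at hc
    simpa [hSr, Matrix.map_apply] using hc
  have hkerV : LinearMap.ker (Matrix.vecMulLinear Sr) ≤ V := by
    obtain ⟨nn, b, hbker, hkeq⟩ := ker_real_eq_span S
    rw [hSr, hkeq, Submodule.span_le]
    rintro - ⟨i, rfl⟩
    obtain ⟨d, w, hdpos, hwd, hwker⟩ := rat_ker_int S (b i) (hbker i)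
    have hwV := int_ker_mem_span S hcons M hall w hwker
    have hbw : (fun x => ((b i x : ℚ) : ℝ)) = (d : ℝ)⁻¹ • (fun x => ((w x : ℤ) : ℝ)) := by
      funext x
      have hcast := congr_arg (Rat.cast : ℚ → ℝ) (hwd x)
      push_cast at hcast
      simp only [Pi.smul_apply, smul_eq_mul]
      have hd0 : (d : ℝ) ≠ 0 := by
        have : (0:ℝ) < d := by exact_mod_cast hdpos
        linarith
      rw [hcast]
      field_simp
    show (fun x => ((b i x : ℚ) : ℝ)) ∈ V
    rw [hbw]
    exact Submodule.smul_mem _ _ hwV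
  constructor
  · intro m
    constructor
    · intro hm
      have hmV : m ∈ V := hkerV (by rw [LinearMap.mem_ker, Matrix.vecMulLinear_apply]; exact hm)
      rw [hV] at hmV
      obtain ⟨c, hc⟩ := (Submodule.mem_span_range_iff_exists_fun ℝ).mp hmV
      refine ⟨c, ?_⟩
      funext x
      have := congr_fun hc x
      simp only [Finset.sum_apply, Pi.smul_apply, smul_eq_mul] at this
      rw [← this]
    · rintro ⟨c, rfl⟩
      have hmem : (fun x => ∑ i, c i * (M i x : ℝ)) ∈ V := by
        have heq : (fun x => ∑ i, c i * (M i x : ℝ))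
            = ∑ i, c i • (fun x => ((M i x : ℕ) : ℝ)) := by
          funext x
          simp [Finset.sum_apply]
        rw [heq]
        exact Submodule.sum_mem _ fun i _ =>
          Submodule.smul_mem _ _ (Submodule.subset_span ⟨i, rfl⟩)
      have h := hVker hmem
      rw [LinearMap.mem_ker, Matrix.vecMulLinear_apply] at h
      exact h
  · have h1 : Module.finrank ℝ (LinearMap.ker (Matrix.vecMulLinear Sr))
        ≤ Module.finrank ℝ V := by
      haveI : Module.Finite ℝ V := by
        infer_instance
      exact Submodule.finrank_mono hkerV
    have h2 : Module.finrank ℝ V ≤ Fintype.card 𝓜 := by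
      have hVrange : V = LinearMap.range
          (Matrix.vecMulLinear (Matrix.of (fun i x => ((M i x : ℕ) : ℝ)))) := by
        rw [range_vecMulLinear]
        rfl
      rw [hVrange]
      calc Module.finrank ℝ (LinearMap.range
            (Matrix.vecMulLinear (Matrix.of (fun i x => ((M i x : ℕ) : ℝ)))))
          ≤ Module.finrank ℝ (𝓜 → ℝ) := LinearMap.finrank_range_le _
        _ = Fintype.card 𝓜 := Module.finrank_fintype_fun_eq_card ℝ
    exact le_trans h1 h2
end
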